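/- In the canonical left-heavy ordered form τ of a rooted multitree T, for every vertex v the subsequences δ(τ_v) and M(τ_v) of the subtree rooted at v occur as contiguous subsequences of δ(τ) and M(τ) respectively, and τ_v is itself a left-heavy (canonical) ordered tree for T_v. -/

import Mathlib

inductive OTree (S : Type) : Type where
  | node : S → List (ℕ × OTree S) → OTree S

namespace OTree

variable {S : Type}

mutual
  def delta : OTree S → ℕ → List (S × ℕ)
    | .node c l, d => (c, d) :: deltaList l d
  def deltaList : List (ℕ × OTree S) → ℕ → List (S × ℕ)
    | [], _ => []
    | (_, t) :: rest, d => delta t (d + 1) ++ deltaList rest d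
end

mutual
  def mseq : OTree S → List ℕ
    | .node _ l => mseqList l
  def mseqList : List (ℕ × OTree S) → List ℕ
    | [] => []
    | (m, t) :: rest => (m :: mseq t) ++ mseqList rest
end

inductive RIso : OTree S → OTree S → Prop where
  | node (c : S) (l l' : List (ℕ × OTree S))
      (e : Fin l.length ≃ Fin l'.length)
      (h1 : ∀ i : Fin l.length, (l.get i).1 = (l'.get (e i)).1)
      (h2 : ∀ i : Fin l.length, RIso (l.get i).2 (l'.get (e i)).2) :
      RIso (.node c l) (.node c l')

inductive IsSubtree : OTree S → OTree S → Prop where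
  | refl (t : OTree S) : IsSubtree t t
  | child {t u : OTree S} {c : S} {l : List (ℕ × OTree S)} {m : ℕ} :
      (m, u) ∈ l → IsSubtree t u → IsSubtree t (.node c l)

def deltaLt [LinearOrder S] (a b : List (S × ℕ)) : Prop :=
  List.Lex (Prod.Lex (· < ·) (· < ·)) a b

def sigLt [LinearOrder S] (a b : List (S × ℕ) × List ℕ) : Prop :=
  deltaLt a.1 b.1 ∨ (a.1 = b.1 ∧ List.Lex (· < ·) a.2 b.2)

def sigLe [LinearOrder S] (a b : List (S × ℕ) × List ℕ) : Prop :=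
  a = b ∨ sigLt a b

def sigOf (t : OTree S) : List (S × ℕ) × List ℕ := (t.delta 0, t.mseq)

def IsCanonical [LinearOrder S] (τ : OTree S) : Prop :=
  ∀ τ', RIso τ' τ → sigLe (sigOf τ') (sigOf τ)

def IsSignature [LinearOrder S] (T : OTree S) (s : List (S × ℕ) × List ℕ) : Prop :=
  (∃ τ, RIso τ T ∧ sigOf τ = s) ∧ ∀ τ, RIso τ T → sigLe (sigOf τ) s

def shiftk (k : ℕ) (l : List (S × ℕ)) : List (S × ℕ) := l.map fun p => (p.1, p.2 + k)

/- ### auxiliary lemmas -/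

theorem shiftk_zero (l : List (S × ℕ)) : shiftk 0 l = l := by
  simp [shiftk]

theorem shiftk_shiftk (k d : ℕ) (l : List (S × ℕ)) :
    shiftk k (shiftk d l) = shiftk (d + k) l := by
  simp [shiftk, Nat.add_assoc]

theorem shiftk_length (k : ℕ) (l : List (S × ℕ)) : (shiftk k l).length = l.length := by
  simp [shiftk]

mutual
  theorem delta_shift : ∀ (t : OTree S) (d k : ℕ), delta t (d + k) = shiftk k (delta t d)
    | .node c l, d, k => by
      rw [delta, delta]
      show _ = ((c, d + k) :: shiftk k (deltaList l d))
      rw [deltaList_shift l d k]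
  theorem deltaList_shift : ∀ (l : List (ℕ × OTree S)) (d k : ℕ),
      deltaList l (d + k) = shiftk k (deltaList l d)
    | [], _, _ => rfl
    | (m, t) :: rest, d, k => by
      rw [deltaList, deltaList, show d + k + 1 = (d + 1) + k from by omega,
        delta_shift t (d+1) k, deltaList_shift rest d k]
      simp [shiftk]
end

theorem delta_eq_shiftk (t : OTree S) (d : ℕ) : delta t d = shiftk d (delta t 0) := by
  have := delta_shift t 0 d
  simpa using this

theorem deltaList_append (a b : List (ℕ × OTree S)) (d : ℕ) :
    deltaList (a ++ b) d = deltaList a d ++ deltaList b d := by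
  induction a with
  | nil => rfl
  | cons p rest ih =>
    obtain ⟨m, t⟩ := p
    simp [deltaList, ih]

theorem mseqList_append (a b : List (ℕ × OTree S)) :
    mseqList (a ++ b) = mseqList a ++ mseqList b := by
  induction a with
  | nil => rfl
  | cons p rest ih =>
    obtain ⟨m, t⟩ := p
    simp [mseqList, ih]

theorem riso_refl : ∀ t : OTree S, RIso t t
  | .node c l =>
    .node c l l (Equiv.refl _) (fun _ => rfl)
      (fun i => riso_refl (l.get i).2)
termination_by t => sizeOf t
decreasing_by
  have h1 : sizeOf (l.get i) < sizeOf l := List.sizeOf_lt_of_mem (l.get_mem i)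
  have h2 : sizeOf (l.get i).2 < sizeOf (l.get i) := by
    rcases l.get i with ⟨m, t⟩
    simp
  simp only [OTree.node.sizeOf_spec]
  omega

/-- expressing `deltaList` as a flatten -/
theorem deltaList_eq_flatten (l : List (ℕ × OTree S)) (d : ℕ) :
    deltaList l d = (l.map fun p => delta p.2 (d + 1)).flatten := by
  induction l with
  | nil => rfl
  | cons p rest ih =>
    obtain ⟨m, t⟩ := p
    simp [deltaList, ih]

theorem mseqList_eq_flatten (l : List (ℕ × OTree S)) :
    mseqList l = (l.map fun p => p.1 :: mseq p.2).flatten := by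
  induction l with
  | nil => rfl
  | cons p rest ih =>
    obtain ⟨m, t⟩ := p
    simp [mseqList, ih]

theorem sum_map_get {M : Type*} [AddCommMonoid M] {α : Type*} (l : List α) (f : α → M) :
    (l.map f).sum = ∑ i : Fin l.length, f (l.get i) :=
  (Fin.sum_univ_fun_getElem l f).symm

theorem delta_length_riso {t t' : OTree S} (h : RIso t t') (d : ℕ) :
    (delta t d).length = (delta t' d).length := by
  induction h generalizing d with
  | node c l l' e h1 h2 ih =>
    rw [delta, delta, deltaList_eq_flatten, deltaList_eq_flatten]
    simp only [List.length_cons, List.length_flatten, List.map_map]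
    congr 1
    rw [sum_map_get, sum_map_get]
    exact Fintype.sum_equiv e _ _ (fun i => ih i (d+1))

theorem mseq_length_riso {t t' : OTree S} (h : RIso t t') :
    (mseq t).length = (mseq t').length := by
  induction h with
  | node c l l' e h1 h2 ih =>
    rw [mseq, mseq, mseqList_eq_flatten, mseqList_eq_flatten]
    simp only [List.length_flatten, List.map_map]
    rw [sum_map_get, sum_map_get]
    exact Fintype.sum_equiv e _ _
      (fun i => by simp only [Function.comp_apply, List.length_cons, ih i])

theorem lex_append_left {α : Type*} {r : α → α → Prop} {a b : List α} (x : List α)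
    (h : List.Lex r a b) : List.Lex r (x ++ a) (x ++ b) := by
  induction x with
  | nil => exact h
  | cons c x ih => exact .cons ih

theorem lex_append {α : Type*} {r : α → α → Prop} :
    ∀ (a b : List α), a.length = b.length → List.Lex r a b →
      ∀ (y z : List α), List.Lex r (a ++ y) (b ++ z)
  | [], [], _, h, _, _ => by cases h
  | [], _ :: _, hl, _, _, _ => by simp at hl
  | _ :: _, [], hl, _, _, _ => by simp at hl
  | a :: as, b :: bs, hl, h, y, z => by
    cases h with
    | rel hab => exact .rel hab
    | cons h' => exact .cons (lex_append as bs (by simpa using hl) h' y z)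

theorem infix_of_mem_deltaList {m : ℕ} {u : OTree S} {l : List (ℕ × OTree S)} (d : ℕ)
    (h : (m, u) ∈ l) : delta u (d + 1) <:+: deltaList l d := by
  induction l with
  | nil => cases h
  | cons p rest ih =>
    obtain ⟨m', t⟩ := p
    rcases List.mem_cons.1 h with h | h
    · cases h
      rw [deltaList]
      exact (List.prefix_append _ _).isInfix
    · exact (ih h).trans (by rw [deltaList]; exact (List.suffix_append _ _).isInfix)

theorem infix_of_mem_mseqList {m : ℕ} {u : OTree S} {l : List (ℕ × OTree S)}
    (h : (m, u) ∈ l) : mseq u <:+: mseqList l := by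
  induction l with
  | nil => cases h
  | cons p rest ih =>
    obtain ⟨m', t⟩ := p
    rcases List.mem_cons.1 h with h | h
    · cases h
      rw [mseqList]
      exact ⟨[m], mseqList rest, by simp⟩
    · exact (ih h).trans (by rw [mseqList]; exact (List.suffix_append _ _).isInfix)

theorem infix_map {α β : Type*} (f : α → β) {a b : List α} (h : a <:+: b) :
    a.map f <:+: b.map f := by
  obtain ⟨s, t, rfl⟩ := h
  exact ⟨s.map f, t.map f, by simp⟩

section Canon
variable [LinearOrder S]

instance : IsAsymm (S × ℕ) (Prod.Lex ((· < ·) : S → S → Prop) ((· < ·) : ℕ → ℕ → Prop)) :=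
  ⟨fun a b h h' => absurd (_root_.trans h h') (irrefl a)⟩

theorem deltaLt_asymm {a b : List (S × ℕ)} (h : deltaLt a b) : ¬ deltaLt b a :=
  _root_.asymm (r := List.Lex (Prod.Lex ((· < ·) : S → S → Prop) ((· < ·) : ℕ → ℕ → Prop))) h

theorem sigLt_irrefl (a : List (S × ℕ) × List ℕ) : ¬ sigLt a a := by
  rintro (h | ⟨-, h⟩)
  · exact deltaLt_asymm h h
  · exact _root_.irrefl _ h

theorem sigLt_asymm {a b : List (S × ℕ) × List ℕ} (h : sigLt a b) : ¬ sigLt b a := by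
  rintro (h' | ⟨e', h'⟩) <;> rcases h with h | ⟨e, h⟩
  · exact deltaLt_asymm h h'
  · rw [e] at h'; exact deltaLt_asymm h' h'
  · rw [e'] at h; exact deltaLt_asymm h h
  · exact _root_.asymm (r := List.Lex ((· < ·) : ℕ → ℕ → Prop)) h h'

theorem sigLt_trichotomy (a b : List (S × ℕ) × List ℕ) :
    sigLe a b ∨ sigLt b a := by
  rcases (trichotomous a.1 b.1 :
      List.Lex (Prod.Lex (· < ·) (· < ·)) a.1 b.1 ∨ a.1 = b.1 ∨
      List.Lex (Prod.Lex (· < ·) (· < ·)) b.1 a.1) with h | h | h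
  · exact Or.inl (Or.inr (Or.inl h))
  · rcases trichotomous_of (List.Lex ((· < ·) : ℕ → ℕ → Prop)) a.2 b.2 with h2 | h2 | h2
    · exact Or.inl (Or.inr (Or.inr ⟨h, h2⟩))
    · exact Or.inl (Or.inl (Prod.ext h h2))
    · exact Or.inr (Or.inr ⟨h.symm, h2⟩)
  · exact Or.inr (Or.inl h)

theorem lex_shiftk {k : ℕ} {a b : List (S × ℕ)} (h : deltaLt a b) :
    deltaLt (shiftk k a) (shiftk k b) := by
  induction h with
  | nil => exact List.Lex.nil
  | @rel a l b l' hab =>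
    refine List.Lex.rel ?_
    obtain ⟨a1, a2⟩ := a
    obtain ⟨b1, b2⟩ := b
    cases hab with
    | left _ _ h => exact Prod.Lex.left _ _ h
    | right _ h => exact Prod.Lex.right _ (by omega)
  | cons h ih => exact List.Lex.cons ih

theorem canonical_child {c : S} {l : List (ℕ × OTree S)} {m : ℕ} {u : OTree S}
    (hc : IsCanonical (OTree.node c l)) (hmem : (m, u) ∈ l) : IsCanonical u := by
  intro u' hiso
  rcases sigLt_trichotomy (sigOf u') (sigOf u) with h | hgt
  · exact h
  exfalso
  -- locate u in l
  obtain ⟨i, hi⟩ := List.get_of_mem hmem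
  have hilt : (i : ℕ) < l.length := i.2
  set l' : List (ℕ × OTree S) := l.set i (m, u') with hl'
  have hlen : l'.length = l.length := by simp [hl']
  -- the isomorphism
  have hiso' : RIso (OTree.node c l') (OTree.node c l) := by
    refine RIso.node c l' l (finCongr hlen) ?_ ?_
    · intro j
      have hj : (j : ℕ) < l.length := by rw [← hlen]; exact j.2
      have : l'.get j = if (i : ℕ) = (j : ℕ) then (m, u') else l.get ⟨j, hj⟩ := by
        show (l.set (i : ℕ) (m, u'))[(j : ℕ)] = _
        rw [List.getElem_set]
        rfl
      rw [this]
      have hfin : l.get (finCongr hlen j) = l.get ⟨j, hj⟩ := rfl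
      rw [hfin]
      split
      · next hij =>
        have : l.get ⟨(j : ℕ), hj⟩ = (m, u) := by
          rw [← hi]; congr 1; ext; simp [hij.symm]
        rw [this]
      · rfl
    · intro j
      have hj : (j : ℕ) < l.length := by rw [← hlen]; exact j.2
      have : l'.get j = if (i : ℕ) = (j : ℕ) then (m, u') else l.get ⟨j, hj⟩ := by
        show (l.set (i : ℕ) (m, u'))[(j : ℕ)] = _
        rw [List.getElem_set]
        rfl
      rw [this]
      have hfin : l.get (finCongr hlen j) = l.get ⟨j, hj⟩ := rfl
      rw [hfin]
      split
      · next hij =>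
        have : l.get ⟨(j : ℕ), hj⟩ = (m, u) := by
          rw [← hi]; congr 1; ext; simp [hij.symm]
        rw [this]
        exact hiso
      · exact riso_refl _
  -- decompositions
  have hdecomp : l = l.take i ++ (m, u) :: l.drop (i + 1) := by
    conv_lhs => rw [← List.take_append_drop (i : ℕ) l]
    congr 1
    rw [List.drop_eq_getElem_cons hilt]
    simp [← hi]
  have hdecomp' : l' = l.take i ++ (m, u') :: l.drop (i + 1) :=
    List.set_eq_take_cons_drop _ hilt
  -- delta decomposition
  have hd : deltaList l 0 =
      deltaList (l.take i) 0 ++ (delta u 1 ++ deltaList (l.drop (i+1)) 0) := by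
    conv_lhs => rw [hdecomp]
    rw [deltaList_append, deltaList]
  have hd' : deltaList l' 0 =
      deltaList (l.take i) 0 ++ (delta u' 1 ++ deltaList (l.drop (i+1)) 0) := by
    conv_lhs => rw [hdecomp']
    rw [deltaList_append, deltaList]
  have hm : mseqList l = mseqList (l.take i) ++ ((m :: mseq u) ++ mseqList (l.drop (i+1))) := by
    conv_lhs => rw [hdecomp]
    rw [mseqList_append, mseqList]
  have hm' : mseqList l' =
      mseqList (l.take i) ++ ((m :: mseq u') ++ mseqList (l.drop (i+1))) := by
    conv_lhs => rw [hdecomp']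
    rw [mseqList_append, mseqList]
  have hlen1 : (delta u 1).length = (delta u' 1).length := (delta_length_riso hiso 1).symm
  have hmlen : (mseq u).length = (mseq u').length := (mseq_length_riso hiso).symm
  -- show sigLt (sigOf (node c l)) (sigOf (node c l'))
  have key : sigLt (sigOf (OTree.node c l)) (sigOf (OTree.node c l')) := by
    rcases hgt with h1 | ⟨heq, h2⟩
    · -- deltaLt case
      left
      show deltaLt (delta (OTree.node c l) 0) (delta (OTree.node c l') 0)
      rw [delta, delta, hd, hd']
      have h1' : deltaLt (delta u 1) (delta u' 1) := by
        rw [delta_eq_shiftk u 1, delta_eq_shiftk u' 1]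
        exact lex_shiftk h1
      exact List.Lex.cons (lex_append_left _ (lex_append _ _ hlen1 h1' _ _))
    · -- mseq case
      right
      constructor
      · show delta (OTree.node c l) 0 = delta (OTree.node c l') 0
        have : delta u 1 = delta u' 1 := by
          rw [delta_eq_shiftk u 1, delta_eq_shiftk u' 1]
          exact congrArg _ heq
        rw [delta, delta, hd, hd', this]
      · show List.Lex (· < ·) (mseq (OTree.node c l)) (mseq (OTree.node c l'))
        rw [mseq, mseq, hm, hm']
        refine lex_append_left _ ?_
        exact lex_append _ _ (by simpa [sigOf] using hmlen) (List.Lex.cons h2) _ _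
  -- contradiction
  rcases hc _ hiso' with heq | hlt
  · rw [← heq] at key
    exact sigLt_irrefl _ key
  · exact sigLt_asymm key hlt

end Canon

end OTree

/-- In the canonical left-heavy ordered form τ, the sequences δ(τ_v) and M(τ_v)
of any subtree occur (after the appropriate depth shift) as contiguous
subsequences of δ(τ) and M(τ), and the subtree is itself canonical. -/
theorem canonical_subtree_infix {S : Type} [LinearOrder S] (τ : OTree S)
    (hc : OTree.IsCanonical τ) (s : OTree S) (hs : OTree.IsSubtree s τ) :
    (∃ d : ℕ, (OTree.shiftk d (s.delta 0)) <:+: (τ.delta 0)) ∧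
    (s.mseq <:+: τ.mseq) ∧ OTree.IsCanonical s := by
  revert hc
  induction hs with
  | refl =>
    intro hc
    exact ⟨⟨0, by rw [OTree.shiftk_zero]⟩, List.infix_rfl, hc⟩
  | @child u c l m hmem hsub ih =>
    intro hc
    have hcu : OTree.IsCanonical u := OTree.canonical_child hc hmem
    obtain ⟨⟨d, hinf⟩, hminf, hcs⟩ := ih hcu
    refine ⟨⟨d + 1, ?_⟩, ?_, hcs⟩
    · have h1 : OTree.shiftk (d+1) (s.delta 0) <:+: OTree.delta u 1 := by
        rw [← OTree.shiftk_shiftk 1 d, OTree.delta_eq_shiftk u 1]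
        exact OTree.infix_map _ hinf
      refine h1.trans ?_
      have := OTree.infix_of_mem_deltaList (u := u) 0 hmem
      refine this.trans ?_
      rw [OTree.delta]
      exact (List.suffix_cons _ _).isInfix
    · refine hminf.trans ?_
      have := OTree.infix_of_mem_mseqList (u := u) hmem
      rw [OTree.mseq]
      exact this
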